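/- Let a, b be positive reals with a ≠ b, U₀ = diag(a,b), U₁ = diag(b,a). Then there exists a rotation Q ∈ SO(2) and vectors v ∈ ℝ², n ∈ ℝ² with |n| = 1 such that U₀ - Q·U₁ = v ⊗ n, with n = (1/√2)(1,1) and v = √2·((a²-b²)/(a²+b²))·(a,-b). -/

import Mathlib

open Matrix

def SO2 : Set (Matrix (Fin 2) (Fin 2) ℝ) :=
  {Q | Q * Qᵀ = 1 ∧ Q.det = 1}

theorem rank_one_connection_plus (a b : ℝ) (ha : 0 < a) (hb : 0 < b) (hab : a ≠ b) :
    ∃ Q ∈ SO2, ∃ v nvec : Fin 2 → ℝ,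
      v = (Real.sqrt 2 * ((a ^ 2 - b ^ 2) / (a ^ 2 + b ^ 2))) • ![a, -b] ∧
      nvec = (1 / Real.sqrt 2) • ![1, 1] ∧
      (nvec 0) ^ 2 + (nvec 1) ^ 2 = 1 ∧
      (!![a, 0; 0, b] : Matrix (Fin 2) (Fin 2) ℝ) - Q * !![b, 0; 0, a] =
        Matrix.vecMulVec v nvec := by
  have hs : a ^ 2 + b ^ 2 ≠ 0 := by positivity
  have h2 : Real.sqrt 2 * Real.sqrt 2 = 2 := by
    exact Real.mul_self_sqrt (by norm_num)
  have h2ne : Real.sqrt 2 ≠ 0 := by positivity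
  refine ⟨!![2*a*b/(a^2+b^2), -((a^2-b^2)/(a^2+b^2));
            (a^2-b^2)/(a^2+b^2), 2*a*b/(a^2+b^2)], ⟨?_, ?_⟩, _, _, rfl, rfl, ?_, ?_⟩
  · ext i j
    fin_cases i <;> fin_cases j <;>
      simp [Matrix.mul_apply, Fin.sum_univ_succ, Matrix.one_apply, Matrix.transpose_apply, Matrix.vecHead, Matrix.vecTail] <;>
      field_simp <;> ring
  · simp [Matrix.det_fin_two]
    field_simp
    ring
  · simp [Matrix.smul_cons, Matrix.smul_empty]
    field_simp
    norm_num
  · ext i j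
    fin_cases i <;> fin_cases j <;>
      simp [Matrix.mul_apply, Fin.sum_univ_succ, Matrix.vecMulVec_apply] <;>
      field_simp <;> ring
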